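/- Let x_L < x_R be reals with midpoint M = (x_L+x_R)/2, and let μ be a Borel probability measure on ℝ with finite first moment. Then ∫ max(|y − x_L|, |y − x_R|) d(T_{x_L,x_R}μ)(y) = ∫ max(|y − x_L|, |y − x_R|) dμ(y); that is, the transformation T preserves the expected egalitarian social cost for the two-agent profile (x_L, x_R). -/

import Mathlib

open MeasureTheory

/-- The transformation `T` from the paper: given `x_L < x_R` with midpoint
`M = (x_L+x_R)/2` and a measure `μ`, the transformed measure agrees with `μ` outside
`[x_L, x_R]`, assigns measure zero to `(x_L,M) ∪ (M,x_R)`, and moves the mass `p_ℓ` of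
`(x_L,M)` (with conditional mean `π_ℓ = q_ℓ x_L + (1-q_ℓ) M`) onto the points `x_L` and
`M` with weights `q_ℓ p_ℓ` and `(1-q_ℓ) p_ℓ`, and symmetrically the mass `p_r` of
`(M,x_R)` onto `x_R` and `M`. (When `p_ℓ = 0` the products `q_ℓ p_ℓ` and `(1-q_ℓ) p_ℓ`
vanish, and similarly on the right.) -/
noncomputable def Tmeas (xL xR : ℝ) (μ : Measure ℝ) : Measure ℝ :=
  let M := (xL + xR) / 2
  let pl := (μ (Set.Ioo xL M)).toReal
  let pr := (μ (Set.Ioo M xR)).toReal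
  let πl := (∫ y in Set.Ioo xL M, y ∂μ) / pl
  let πr := (∫ y in Set.Ioo M xR, y ∂μ) / pr
  let ql := (M - πl) / (M - xL)
  let qr := (πr - M) / (xR - M)
  μ.restrict (Set.Iio xL ∪ Set.Ioi xR)
    + (μ {xL} + ENNReal.ofReal (ql * pl)) • Measure.dirac xL
    + (μ {M} + ENNReal.ofReal ((1 - ql) * pl + (1 - qr) * pr)) • Measure.dirac M
    + (μ {xR} + ENNReal.ofReal (qr * pr)) • Measure.dirac xR

private lemma side_calc (xL d pl a : ℝ) (hd : 0 < d) (hpl : 0 < pl) :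
    ((xL + d) - a / pl) / d * pl * (2 * d)
      + (1 - ((xL + d) - a / pl) / d) * pl * d = (xL + 2 * d) * pl - a := by
  field_simp
  ring

private lemma integrable_smul_dirac {f : ℝ → ℝ} (hfm : Measurable f)
    (c : ENNReal) (hc : c ≠ ⊤) (x : ℝ) : Integrable f (c • Measure.dirac x) := by
  refine ⟨hfm.aestronglyMeasurable, ?_⟩
  rw [HasFiniteIntegral, lintegral_smul_measure, lintegral_dirac]
  exact ENNReal.mul_lt_top hc.lt_top ENNReal.coe_lt_top

/-- the transformation `T` preserves the expected egalitarian social cost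
for the two-agent profile `(x_L, x_R)`. -/
theorem stmt2 (xL xR : ℝ) (h : xL < xR) (μ : Measure ℝ)
    (hprob : IsProbabilityMeasure μ) (hmom : Integrable (fun y => |y|) μ) :
    ∫ y, max |y - xL| |y - xR| ∂(Tmeas xL xR μ)
      = ∫ y, max |y - xL| |y - xR| ∂μ := by
  simp only [Tmeas]
  set M : ℝ := (xL + xR) / 2 with hM
  have hxLM : xL < M := by rw [hM]; linarith
  have hMxR : M < xR := by rw [hM]; linarith
  set f : ℝ → ℝ := fun y => max |y - xL| |y - xR| with hfdef
  have hfm : Measurable f :=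
    ((measurable_id.sub measurable_const).abs).max ((measurable_id.sub measurable_const).abs)
  have hid : Integrable (fun y : ℝ => y) μ :=
    hmom.mono' measurable_id.aestronglyMeasurable (Filter.Eventually.of_forall fun y => by simp)
  have hfint : Integrable f μ := by
    have h1 : Integrable (fun y : ℝ => |y - xL|) μ := (hid.sub (integrable_const xL)).abs
    have h2 : Integrable (fun y : ℝ => |y - xR|) μ := (hid.sub (integrable_const xR)).abs
    exact h1.sup h2
  -- values of f
  have hfxL : f xL = xR - xL := by
    simp only [hfdef, sub_self, abs_zero]
    rw [abs_sub_comm, abs_of_nonneg (by linarith)]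
    exact max_eq_right (by linarith)
  have hfxR : f xR = xR - xL := by
    simp only [hfdef, sub_self, abs_zero]
    rw [abs_of_nonneg (by linarith)]
    exact max_eq_left (by linarith)
  have hfM : f M = (xR - xL) / 2 := by
    simp only [hfdef]
    rw [abs_of_nonneg (by linarith), abs_sub_comm, abs_of_nonneg (by linarith)]
    rw [hM]; rw [max_eq_left (by linarith)]; ring
  set pl := (μ (Set.Ioo xL M)).toReal with hpl_def
  set pr := (μ (Set.Ioo M xR)).toReal with hpr_def
  set a := ∫ y in Set.Ioo xL M, y ∂μ with ha_def
  set b := ∫ y in Set.Ioo M xR, y ∂μ with hb_def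
  set ql := (M - a / pl) / (M - xL) with hql_def
  set qr := (b / pr - M) / (xR - M) with hqr_def
  have hplnn : 0 ≤ pl := ENNReal.toReal_nonneg
  have hprnn : 0 ≤ pr := ENNReal.toReal_nonneg
  -- bounds on a and b
  have ha_le : a ≤ M * pl := by
    have : a ≤ ∫ _ in Set.Ioo xL M, M ∂μ :=
      setIntegral_mono_on hid.integrableOn
        (integrableOn_const (measure_ne_top μ _)) measurableSet_Ioo
        (fun y hy => le_of_lt hy.2)
    simpa [setIntegral_const, smul_eq_mul, mul_comm, measureReal_def] using this
  have ha_ge : xL * pl ≤ a := by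
    have : (∫ _ in Set.Ioo xL M, xL ∂μ) ≤ a :=
      setIntegral_mono_on (integrableOn_const (measure_ne_top μ _))
        hid.integrableOn measurableSet_Ioo (fun y hy => le_of_lt hy.1)
    simpa [setIntegral_const, smul_eq_mul, mul_comm, measureReal_def] using this
  have hb_le : b ≤ xR * pr := by
    have : b ≤ ∫ _ in Set.Ioo M xR, xR ∂μ :=
      setIntegral_mono_on hid.integrableOn
        (integrableOn_const (measure_ne_top μ _)) measurableSet_Ioo
        (fun y hy => le_of_lt hy.2)
    simpa [setIntegral_const, smul_eq_mul, mul_comm, measureReal_def] using this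
  have hb_ge : M * pr ≤ b := by
    have : (∫ _ in Set.Ioo M xR, M ∂μ) ≤ b :=
      setIntegral_mono_on (integrableOn_const (measure_ne_top μ _))
        hid.integrableOn measurableSet_Ioo (fun y hy => le_of_lt hy.1)
    simpa [setIntegral_const, smul_eq_mul, mul_comm, measureReal_def] using this
  -- a, b vanish when pl, pr do
  have ha0 : pl = 0 → a = 0 := by
    intro hpl0
    have : μ (Set.Ioo xL M) = 0 := by
      have := measure_ne_top μ (Set.Ioo xL M)
      rw [hpl_def] at hpl0
      exact (ENNReal.toReal_eq_zero_iff _).1 hpl0 |>.resolve_right this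
    rw [ha_def, Measure.restrict_eq_zero.mpr this, integral_zero_measure]
  have hb0 : pr = 0 → b = 0 := by
    intro hpr0
    have : μ (Set.Ioo M xR) = 0 := by
      have := measure_ne_top μ (Set.Ioo M xR)
      rw [hpr_def] at hpr0
      exact (ENNReal.toReal_eq_zero_iff _).1 hpr0 |>.resolve_right this
    rw [hb_def, Measure.restrict_eq_zero.mpr this, integral_zero_measure]
  -- nonnegativity of the transported weights
  have hqlpl : 0 ≤ ql * pl := by
    rcases eq_or_lt_of_le hplnn with hpl0 | hpl0
    · simp [← hpl0]
    · refine mul_nonneg (div_nonneg ?_ (by linarith)) hplnn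
      rw [sub_nonneg, div_le_iff₀ hpl0]; linarith
  have hqrpr : 0 ≤ qr * pr := by
    rcases eq_or_lt_of_le hprnn with hpr0 | hpr0
    · simp [← hpr0]
    · refine mul_nonneg (div_nonneg ?_ (by linarith)) hprnn
      rw [sub_nonneg, le_div_iff₀ hpr0]; linarith
  have h1qlpl : 0 ≤ (1 - ql) * pl := by
    rcases eq_or_lt_of_le hplnn with hpl0 | hpl0
    · simp [← hpl0]
    · refine mul_nonneg ?_ hplnn
      rw [sub_nonneg, hql_def, div_le_one (by linarith)]
      have : xL ≤ a / pl := by rw [le_div_iff₀ hpl0]; linarith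
      linarith
  have h1qrpr : 0 ≤ (1 - qr) * pr := by
    rcases eq_or_lt_of_le hprnn with hpr0 | hpr0
    · simp [← hpr0]
    · refine mul_nonneg ?_ hprnn
      rw [sub_nonneg, hqr_def, div_le_one (by linarith)]
      have : b / pr ≤ xR := by rw [div_le_iff₀ hpr0]; linarith
      linarith
  have hmid : 0 ≤ (1 - ql) * pl + (1 - qr) * pr := add_nonneg h1qlpl h1qrpr
  -- the three dirac coefficients
  set c1 : ENNReal := μ {xL} + ENNReal.ofReal (ql * pl) with hc1
  set c2 : ENNReal := μ {M} + ENNReal.ofReal ((1 - ql) * pl + (1 - qr) * pr) with hc2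
  set c3 : ENNReal := μ {xR} + ENNReal.ofReal (qr * pr) with hc3
  have hc1top : c1 ≠ ⊤ := ENNReal.add_ne_top.2 ⟨measure_ne_top μ _, ENNReal.ofReal_ne_top⟩
  have hc2top : c2 ≠ ⊤ := ENNReal.add_ne_top.2 ⟨measure_ne_top μ _, ENNReal.ofReal_ne_top⟩
  have hc3top : c3 ≠ ⊤ := ENNReal.add_ne_top.2 ⟨measure_ne_top μ _, ENNReal.ofReal_ne_top⟩
  have hc1r : c1.toReal = (μ {xL}).toReal + ql * pl := by
    rw [hc1, ENNReal.toReal_add (measure_ne_top μ _) ENNReal.ofReal_ne_top,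
      ENNReal.toReal_ofReal hqlpl]
  have hc2r : c2.toReal = (μ {M}).toReal + ((1 - ql) * pl + (1 - qr) * pr) := by
    rw [hc2, ENNReal.toReal_add (measure_ne_top μ _) ENNReal.ofReal_ne_top,
      ENNReal.toReal_ofReal hmid]
  have hc3r : c3.toReal = (μ {xR}).toReal + qr * pr := by
    rw [hc3, ENNReal.toReal_add (measure_ne_top μ _) ENNReal.ofReal_ne_top,
      ENNReal.toReal_ofReal hqrpr]
  -- compute LHS
  have hi1 : Integrable f (μ.restrict (Set.Iio xL ∪ Set.Ioi xR)) := hfint.integrableOn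
  have hi2 : Integrable f (c1 • Measure.dirac xL) := integrable_smul_dirac hfm c1 hc1top xL
  have hi3 : Integrable f (c2 • Measure.dirac M) := integrable_smul_dirac hfm c2 hc2top M
  have hi4 : Integrable f (c3 • Measure.dirac xR) := integrable_smul_dirac hfm c3 hc3top xR
  have hLHS : ∫ y, f y ∂(μ.restrict (Set.Iio xL ∪ Set.Ioi xR) + c1 • Measure.dirac xL
        + c2 • Measure.dirac M + c3 • Measure.dirac xR)
      = (∫ y in Set.Iio xL ∪ Set.Ioi xR, f y ∂μ)
        + c1.toReal * f xL + c2.toReal * f M + c3.toReal * f xR := by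
    rw [integral_add_measure ((hi1.add_measure hi2).add_measure hi3) hi4,
      integral_add_measure (hi1.add_measure hi2) hi3,
      integral_add_measure hi1 hi2]
    rw [integral_smul_measure, integral_smul_measure, integral_smul_measure,
      integral_dirac, integral_dirac, integral_dirac]
    simp [smul_eq_mul]
  -- decompose the RHS
  have hIooL : ∫ y in Set.Ioo xL M, f y ∂μ = xR * pl - a := by
    have hcongr : ∫ y in Set.Ioo xL M, f y ∂μ = ∫ y in Set.Ioo xL M, (xR - y) ∂μ := by
      refine setIntegral_congr_fun measurableSet_Ioo (fun y hy => ?_)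
      have h1 : |y - xL| = y - xL := abs_of_nonneg (by linarith [hy.1])
      have h2 : |y - xR| = xR - y := by
        rw [abs_sub_comm]; exact abs_of_nonneg (by linarith [hy.2, hMxR])
      simp only [hfdef, h1, h2]
      exact max_eq_right (by have := hy.2; rw [hM] at this; linarith)
    rw [hcongr, integral_sub (integrableOn_const (C := xR) (measure_ne_top μ _))
      hid.integrableOn, setIntegral_const, smul_eq_mul, mul_comm, ← ha_def, measureReal_def, ← hpl_def]
  have hIooR : ∫ y in Set.Ioo M xR, f y ∂μ = b - xL * pr := by
    have hcongr : ∫ y in Set.Ioo M xR, f y ∂μ = ∫ y in Set.Ioo M xR, (y - xL) ∂μ := by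
      refine setIntegral_congr_fun measurableSet_Ioo (fun y hy => ?_)
      have h1 : |y - xL| = y - xL := abs_of_nonneg (by linarith [hy.1, hxLM])
      have h2 : |y - xR| = xR - y := by
        rw [abs_sub_comm]; exact abs_of_nonneg (by linarith [hy.2])
      simp only [hfdef, h1, h2]
      exact max_eq_left (by have := hy.1; rw [hM] at this; linarith)
    rw [hcongr, integral_sub hid.integrableOn
      (integrableOn_const (measure_ne_top μ _)), setIntegral_const, smul_eq_mul,
      mul_comm, ← hb_def, measureReal_def, ← hpr_def]
  -- split ℝ into pieces
  have hsplit : ∫ y, f y ∂μ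
      = (∫ y in Set.Iio xL ∪ Set.Ioi xR, f y ∂μ)
        + ((μ {xL}).toReal * f xL + ((xR * pl - a)
          + ((μ {M}).toReal * f M + ((b - xL * pr) + (μ {xR}).toReal * f xR)))) := by
    have huniv : (Set.univ : Set ℝ) = (Set.Iio xL ∪ Set.Ioi xR)
        ∪ ({xL} ∪ (Set.Ioo xL M ∪ ({M} ∪ (Set.Ioo M xR ∪ {xR})))) := by
      ext y
      simp only [Set.mem_univ, Set.mem_union, Set.mem_Iio, Set.mem_Ioi,
        Set.mem_singleton_iff, Set.mem_Ioo, true_iff]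
      rcases lt_trichotomy y xL with h1 | h1 | h1
      · exact Or.inl (Or.inl h1)
      · exact Or.inr (Or.inl h1)
      · rcases lt_trichotomy y M with h2 | h2 | h2
        · exact Or.inr (Or.inr (Or.inl ⟨h1, h2⟩))
        · exact Or.inr (Or.inr (Or.inr (Or.inl h2)))
        · rcases lt_trichotomy y xR with h3 | h3 | h3
          · exact Or.inr (Or.inr (Or.inr (Or.inr (Or.inl ⟨h2, h3⟩))))
          · exact Or.inr (Or.inr (Or.inr (Or.inr (Or.inr h3))))
          · exact Or.inl (Or.inr h3)
    have hdisj1 : Disjoint (Set.Iio xL ∪ Set.Ioi xR)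
        ({xL} ∪ (Set.Ioo xL M ∪ ({M} ∪ (Set.Ioo M xR ∪ {xR})))) := by
      rw [Set.disjoint_left]
      rintro y (hy | hy) hy' <;>
        · simp only [Set.mem_union, Set.mem_singleton_iff, Set.mem_Ioo] at hy'
          simp only [Set.mem_Iio, Set.mem_Ioi] at hy
          rcases hy' with rfl | ⟨h1, h2⟩ | rfl | ⟨h1, h2⟩ | rfl <;> first
            | linarith
            | (rw [hM] at *; linarith)
    have hdisj2 : Disjoint ({xL} : Set ℝ)
        (Set.Ioo xL M ∪ ({M} ∪ (Set.Ioo M xR ∪ {xR}))) := by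
      rw [Set.disjoint_left]
      rintro y rfl hy'
      simp only [Set.mem_union, Set.mem_singleton_iff, Set.mem_Ioo] at hy'
      rcases hy' with ⟨h1, h2⟩ | h1 | ⟨h1, h2⟩ | h1 <;> first
        | linarith
        | (rw [hM] at *; linarith)
    have hdisj3 : Disjoint (Set.Ioo xL M) ({M} ∪ (Set.Ioo M xR ∪ {xR})) := by
      rw [Set.disjoint_left]
      rintro y ⟨hy1, hy2⟩ hy'
      simp only [Set.mem_union, Set.mem_singleton_iff, Set.mem_Ioo] at hy'
      rcases hy' with rfl | ⟨h1, h2⟩ | rfl <;> linarith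
    have hdisj4 : Disjoint ({M} : Set ℝ) (Set.Ioo M xR ∪ {xR}) := by
      rw [Set.disjoint_left]
      rintro y rfl hy'
      simp only [Set.mem_union, Set.mem_singleton_iff, Set.mem_Ioo] at hy'
      rcases hy' with ⟨h1, h2⟩ | h3 <;> linarith
    have hdisj5 : Disjoint (Set.Ioo M xR) ({xR} : Set ℝ) := by
      rw [Set.disjoint_left]
      rintro y ⟨hy1, hy2⟩ hy'
      simp only [Set.mem_singleton_iff] at hy'
      linarith [hy'.symm ▸ hy2]
    have hmeas5 : MeasurableSet (Set.Ioo M xR ∪ {xR} : Set ℝ) :=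
      measurableSet_Ioo.union (measurableSet_singleton _)
    have hmeas4 : MeasurableSet ({M} ∪ (Set.Ioo M xR ∪ {xR}) : Set ℝ) :=
      (measurableSet_singleton _).union hmeas5
    have hmeas3 : MeasurableSet (Set.Ioo xL M ∪ ({M} ∪ (Set.Ioo M xR ∪ {xR})) : Set ℝ) :=
      measurableSet_Ioo.union hmeas4
    have hmeas2 : MeasurableSet ({xL} ∪ (Set.Ioo xL M ∪ ({M} ∪ (Set.Ioo M xR ∪ {xR}))) : Set ℝ) :=
      (measurableSet_singleton _).union hmeas3
    calc ∫ y, f y ∂μ = ∫ y in Set.univ, f y ∂μ := setIntegral_univ.symm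
      _ = _ := by
        rw [huniv, setIntegral_union hdisj1 hmeas2 hfint.integrableOn hfint.integrableOn,
          setIntegral_union hdisj2 hmeas3 hfint.integrableOn hfint.integrableOn,
          setIntegral_union hdisj3 hmeas4 hfint.integrableOn hfint.integrableOn,
          setIntegral_union hdisj4 hmeas5 hfint.integrableOn hfint.integrableOn,
          setIntegral_union hdisj5 (measurableSet_singleton _) hfint.integrableOn
            hfint.integrableOn,
          integral_singleton, integral_singleton, integral_singleton, hIooL, hIooR]
        simp [smul_eq_mul, mul_comm, measureReal_def]
  -- the key per-side identities
  have hleft : ql * pl * (xR - xL) + (1 - ql) * pl * ((xR - xL) / 2) = xR * pl - a := by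
    rcases eq_or_lt_of_le hplnn with hpl0 | hpl0
    · have hpl0' : pl = 0 := hpl0.symm
      rw [ha0 hpl0', hpl0']; ring
    · have hd : (0:ℝ) < (xR - xL) / 2 := by linarith
      have := side_calc xL ((xR - xL) / 2) pl a hd hpl0
      have hMd : M = xL + (xR - xL) / 2 := by rw [hM]; ring
      have hxRd : xR = xL + 2 * ((xR - xL) / 2) := by ring
      rw [hql_def, hMd]
      calc (xL + (xR - xL) / 2 - a / pl) / (xL + (xR - xL) / 2 - xL) * pl * (xR - xL)
            + (1 - (xL + (xR - xL) / 2 - a / pl) / (xL + (xR - xL) / 2 - xL)) * pl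
              * ((xR - xL) / 2)
          = (xL + (xR - xL) / 2 - a / pl) / ((xR - xL) / 2) * pl * (2 * ((xR - xL) / 2))
            + (1 - (xL + (xR - xL) / 2 - a / pl) / ((xR - xL) / 2)) * pl * ((xR - xL) / 2) := by
            ring_nf
        _ = (xL + 2 * ((xR - xL) / 2)) * pl - a := this
        _ = xR * pl - a := by ring_nf
  have hright : qr * pr * (xR - xL) + (1 - qr) * pr * ((xR - xL) / 2) = b - xL * pr := by
    rcases eq_or_lt_of_le hprnn with hpr0 | hpr0
    · have hpr0' : pr = 0 := hpr0.symm
      rw [hb0 hpr0', hpr0']; ring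
    · have hd : (0:ℝ) < (xR - xL) / 2 := by linarith
      -- mirror: use side_calc with reflected variables: xL ↦ -xR, a ↦ -b
      have := side_calc (-xR) ((xR - xL) / 2) pr (-b) hd hpr0
      have hqr' : qr = (-xR + (xR - xL) / 2 - -b / pr) / ((xR - xL) / 2) := by
        rw [hqr_def, hM]; field_simp; ring
      rw [hqr']
      calc (-xR + (xR - xL) / 2 - -b / pr) / ((xR - xL) / 2) * pr * (xR - xL)
            + (1 - (-xR + (xR - xL) / 2 - -b / pr) / ((xR - xL) / 2)) * pr * ((xR - xL) / 2)
          = ((-xR) + ((xR - xL) / 2) - (-b) / pr) / ((xR - xL) / 2) * pr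
              * (2 * ((xR - xL) / 2))
            + (1 - ((-xR) + ((xR - xL) / 2) - (-b) / pr) / ((xR - xL) / 2)) * pr
              * ((xR - xL) / 2) := by ring_nf
        _ = ((-xR) + 2 * ((xR - xL) / 2)) * pr - (-b) := this
        _ = b - xL * pr := by ring
  rw [hLHS, hsplit, hc1r, hc2r, hc3r, hfxL, hfxR, hfM]
  linear_combination hleft + hright
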